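/- Let k ≥ 2 and let PC_k^2 be the 2-set pancake permutation graph. Then the set Σ_{2k−1}^k of vertices v = v_0v_1⋯v_{2k−1} with v_0 = v_{2k−1} is an E-set of PC_k^2: it is an independent set, and every vertex of PC_k^2 not in Σ_{2k−1}^k has exactly one neighbor in Σ_{2k−1}^k. -/

import Mathlib

/-- A string of length `k*l` over the alphabet `Fin k` in which every symbol
occurs exactly `l` times (an `l`-set permutation). -/
def IsMSP (k l : ℕ) (v : Fin (k * l) → Fin k) : Prop :=
  ∀ a : Fin k, (Finset.univ.filter fun i => v i = a).card = l

/-- The vertex set of the star `l`-set transposition graph `ST_k^l`. -/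
abbrev MSP (k l : ℕ) : Type := {v : Fin (k * l) → Fin k // IsMSP k l v}

/-- Star-transposition adjacency: `w` is obtained from `v` by transposing position `0`
with a position `i ≠ 0` whose entry differs from that of position `0`. -/
def STAdj (k l : ℕ) (v w : Fin (k * l) → Fin k) : Prop :=
  ∃ i j : Fin (k * l), (j : ℕ) = 0 ∧ i ≠ j ∧ v i ≠ v j ∧ w = v ∘ Equiv.swap j i

/-- The star `l`-set transposition graph `ST_k^l`. -/
def STGraph (k l : ℕ) : SimpleGraph (MSP k l) :=
  SimpleGraph.fromRel fun v w => STAdj k l v.1 w.1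

/-- Pancake adjacency: `w` is obtained from `v` by reversing a prefix of length `m`,
`2 ≤ m ≤ k*l`, such that `v_{m-1} ≠ v_0`. -/
def PCAdj (k l : ℕ) (v w : Fin (k * l) → Fin k) : Prop :=
  ∃ m : ℕ, ∃ h2 : 2 ≤ m, ∃ hm : m ≤ k * l,
    v ⟨m - 1, by omega⟩ ≠ v ⟨0, by omega⟩ ∧
    (∀ i : Fin (k * l), ∀ _ : (i : ℕ) < m, w i = v ⟨m - 1 - (i : ℕ), by omega⟩) ∧
    (∀ i : Fin (k * l), m ≤ (i : ℕ) → w i = v i)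

/-- The 2-set pancake permutation graph `PC_k^2` (for general `l`: `PC_k^l`). -/
def PCGraph (k l : ℕ) : SimpleGraph (MSP k l) :=
  SimpleGraph.fromRel fun v w => PCAdj k l v.1 w.1

def revE (N m : ℕ) (hm : m ≤ N) : Equiv.Perm (Fin N) :=
  Function.Involutive.toPerm
    (fun i => if h : (i:ℕ) < m then ⟨m - 1 - (i:ℕ), by omega⟩ else i)
    (by
      intro i
      by_cases h : (i:ℕ) < m
      · have h2 : m - 1 - (i:ℕ) < m := by omega
        simp only [h, dif_pos, h2]
        ext
        simp
        omega
      · simp [h])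

lemma revE_lt {N m : ℕ} (hm : m ≤ N) (i : Fin N) (h : (i:ℕ) < m) :
    revE N m hm i = ⟨m - 1 - (i:ℕ), by omega⟩ := by
  simp [revE, Function.Involutive.toPerm, h]

lemma revE_ge {N m : ℕ} (hm : m ≤ N) (i : Fin N) (h : m ≤ (i:ℕ)) :
    revE N m hm i = i := by
  simp [revE, Function.Involutive.toPerm]
  omega

lemma isMSP_comp_perm {k l : ℕ} {v : Fin (k*l) → Fin k} (hv : IsMSP k l v)
    (e : Equiv.Perm (Fin (k*l))) : IsMSP k l (v ∘ e) := by
  intro a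
  have : (Finset.univ.filter fun i => (v ∘ e) i = a)
      = (Finset.univ.filter fun j => v j = a).map e.symm.toEmbedding := by
    ext i
    simp [Equiv.symm_apply_eq, eq_comm]
  rw [this, Finset.card_map, hv a]

lemma pcadj_symm {k l : ℕ} {v w : Fin (k*l) → Fin k} (h : PCAdj k l v w) :
    PCAdj k l w v := by
  obtain ⟨m, h2, hm, hne, hrev, hfix⟩ := h
  refine ⟨m, h2, hm, ?_, ?_, ?_⟩
  · have e1 := hrev ⟨m-1, by omega⟩ (by simp; omega)
    have e2 := hrev ⟨0, by omega⟩ (by simp; omega)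
    simp only at e1 e2
    rw [e1, e2]
    convert hne.symm using 3 <;> omega
  · intro i hi
    have := hrev ⟨m - 1 - (i:ℕ), by omega⟩ (by simp; omega)
    rw [this]
    congr 1
    ext
    simp
    omega
  · intro i hi
    exact (hfix i hi).symm

lemma indep_aux (k : ℕ) (hk : 2 ≤ k) (v w : MSP k 2)
    (hv : v.1 ⟨0, Nat.mul_pos (by omega) (by omega)⟩ = v.1 ⟨k*2-1, Nat.sub_lt (Nat.mul_pos (by omega) (by omega)) (by omega)⟩)
    (hw : w.1 ⟨0, Nat.mul_pos (by omega) (by omega)⟩ = w.1 ⟨k*2-1, Nat.sub_lt (Nat.mul_pos (by omega) (by omega)) (by omega)⟩)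
    (h : PCAdj k 2 v.1 w.1) : False := by
  obtain ⟨m, h2, hm, hne0, hrev, hfix⟩ := h
  rcases eq_or_lt_of_le hm with heq | hlt
  · apply hne0
    have e1 : (⟨m-1, by omega⟩ : Fin (k*2)) = ⟨k*2-1, by omega⟩ := by
      apply Fin.ext; simp; omega
    rw [e1, ← hv]
  · have e1 : w.1 ⟨0, by omega⟩ = v.1 ⟨m-1, by omega⟩ :=
      hrev ⟨0, by omega⟩ (show (0:ℕ) < m by omega)
    have e2 : w.1 ⟨k*2-1, by omega⟩ = v.1 ⟨k*2-1, by omega⟩ :=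
      hfix ⟨k*2-1, by omega⟩ (show m ≤ k*2-1 by omega)
    apply hne0
    calc v.1 ⟨m-1, by omega⟩ = w.1 ⟨0, by omega⟩ := e1.symm
      _ = w.1 ⟨k*2-1, by omega⟩ := hw
      _ = v.1 ⟨k*2-1, by omega⟩ := e2
      _ = v.1 ⟨0, by omega⟩ := hv.symm

set_option maxHeartbeats 1600000 in
/-- the set `Σ_{2k-1}^k` of vertices with `v_0 = v_{2k-1}` is an E-set of
`PC_k^2`: independent, and every outside vertex has exactly one neighbor in it. -/
theorem stmt19 (k : ℕ) (hk : 2 ≤ k)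
    (Sig : Set (MSP k 2))
    (hSig : Sig = {v : MSP k 2 | v.1 ⟨0, by omega⟩ = v.1 ⟨k * 2 - 1, by omega⟩}) :
    (∀ v ∈ Sig, ∀ w ∈ Sig, ¬ (PCGraph k 2).Adj v w) ∧
    (∀ v : MSP k 2, v ∉ Sig → ((PCGraph k 2).neighborSet v ∩ Sig).ncard = 1) := by
  subst hSig
  constructor
  · rintro v hv w hw hadj
    simp only [Set.mem_setOf_eq] at hv hw
    simp only [PCGraph, SimpleGraph.fromRel_adj] at hadj
    obtain ⟨hne, h | h⟩ := hadj
    · exact indep_aux k hk v w hv hw h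
    · exact indep_aux k hk w v hw hv h
  · intro v hv
    simp only [Set.mem_setOf_eq] at hv
    set lst : Fin (k*2) := ⟨k*2-1, by omega⟩ with hlstdef
    have hcard : (Finset.univ.filter fun i => v.1 i = v.1 lst).card = 2 := v.2 (v.1 lst)
    have hlstS : lst ∈ Finset.univ.filter fun i => v.1 i = v.1 lst := by simp
    have hcard1 : ((Finset.univ.filter fun i => v.1 i = v.1 lst).erase lst).card = 1 := by
      rw [Finset.card_erase_of_mem hlstS, hcard]
    obtain ⟨p, hp⟩ := Finset.card_eq_one.mp hcard1
    have hpmem : p ∈ (Finset.univ.filter fun i => v.1 i = v.1 lst).erase lst := by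
      rw [hp]; exact Finset.mem_singleton_self p
    have hpne : p ≠ lst := (Finset.mem_erase.mp hpmem).1
    have hvp : v.1 p = v.1 lst := (Finset.mem_filter.mp (Finset.mem_erase.mp hpmem).2).2
    have hpvalne : (p:ℕ) ≠ k*2-1 := by
      intro h; exact hpne (Fin.ext h)
    have hplt : (p:ℕ) < k*2-1 := by have := p.isLt; omega
    have hpz : (p:ℕ) ≠ 0 := by
      intro h
      apply hv
      have : p = ⟨0, by omega⟩ := Fin.ext h
      rw [← this]; exact hvp
    have huniq : ∀ q : Fin (k*2), v.1 q = v.1 lst → q ≠ lst → q = p := by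
      intro q hq hqlst
      have : q ∈ (Finset.univ.filter fun i => v.1 i = v.1 lst).erase lst :=
        Finset.mem_erase.mpr ⟨hqlst, by simp [hq]⟩
      rw [hp] at this
      exact Finset.mem_singleton.mp this
    have hmle : (p:ℕ) + 1 ≤ k*2 := by omega
    set e := revE (k*2) ((p:ℕ)+1) hmle with hedef
    set w : MSP k 2 := ⟨v.1 ∘ e, isMSP_comp_perm v.2 e⟩ with hwdef
    have hw0 : w.1 ⟨0, by omega⟩ = v.1 lst := by
      show v.1 (e ⟨0, by omega⟩) = v.1 lst
      rw [revE_lt hmle _ (show (0:ℕ) < (p:ℕ)+1 by omega)]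
      have : (⟨(p:ℕ)+1-1-((⟨0, by omega⟩ : Fin (k*2)):ℕ), by omega⟩ : Fin (k*2)) = p := by
        apply Fin.ext; simp
      rw [this]; exact hvp
    have hwlst : w.1 lst = v.1 lst := by
      show v.1 (e lst) = v.1 lst
      rw [revE_ge hmle _ (show (p:ℕ)+1 ≤ ((lst : Fin (k*2)) : ℕ) from by
        show (p:ℕ)+1 ≤ k*2-1; omega)]
    have hwSig : w.1 ⟨0, by omega⟩ = w.1 ⟨k*2-1, by omega⟩ := by
      rw [hw0]; exact hwlst.symm
    have hvwne : v ≠ w := by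
      intro h
      apply hv
      have : v.1 ⟨0, by omega⟩ = w.1 ⟨0, by omega⟩ := by rw [← h]
      rw [this, hw0]
    have hadj_vw : PCAdj k 2 v.1 w.1 := by
      refine ⟨(p:ℕ)+1, by omega, hmle, ?_, ?_, ?_⟩
      · have hi : (⟨(p:ℕ)+1-1, by omega⟩ : Fin (k*2)) = p := Fin.ext (by simp)
        intro hcc
        apply hv
        calc v.1 ⟨0, by omega⟩ = v.1 ⟨(p:ℕ)+1-1, by omega⟩ := hcc.symm
          _ = v.1 p := congrArg v.1 hi
          _ = v.1 lst := hvp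
      · intro i hi
        show v.1 (e i) = _
        rw [revE_lt hmle i hi]
      · intro i hi
        show v.1 (e i) = _
        rw [revE_ge hmle i hi]
    have hset : (PCGraph k 2).neighborSet v ∩
        {v : MSP k 2 | v.1 ⟨0, by omega⟩ = v.1 ⟨k * 2 - 1, by omega⟩} = {w} := by
      ext u
      simp only [Set.mem_inter_iff, SimpleGraph.mem_neighborSet, Set.mem_setOf_eq,
        Set.mem_singleton_iff]
      constructor
      · rintro ⟨hadj, husig⟩
        simp only [PCGraph, SimpleGraph.fromRel_adj] at hadj
        have hP : PCAdj k 2 v.1 u.1 := by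
          obtain ⟨_, h | h⟩ := hadj
          · exact h
          · exact pcadj_symm h
        obtain ⟨m', h2', hm', hne0', hrev', hfix'⟩ := hP
        have hm'lt : m' < k*2 := by
          by_contra hcon
          push_neg at hcon
          have hmeq : m' = k*2 := le_antisymm hm' hcon
          have e1 : u.1 ⟨0, by omega⟩ = v.1 ⟨m'-1, by omega⟩ :=
            hrev' ⟨0, by omega⟩ (show (0:ℕ) < m' by omega)
          have e2 : u.1 ⟨k*2-1, by omega⟩ = v.1 ⟨m'-1-(k*2-1), by omega⟩ :=
            hrev' ⟨k*2-1, by omega⟩ (show k*2-1 < m' by omega)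
          apply hv
          calc v.1 ⟨0, by omega⟩ = v.1 ⟨m'-1-(k*2-1), by omega⟩ :=
                congrArg v.1 (Fin.ext (show (0:ℕ) = m'-1-(k*2-1) by omega))
            _ = u.1 ⟨k*2-1, by omega⟩ := e2.symm
            _ = u.1 ⟨0, by omega⟩ := husig.symm
            _ = v.1 ⟨m'-1, by omega⟩ := e1
            _ = v.1 lst := congrArg v.1 (Fin.ext (show m'-1 = k*2-1 by omega))
        have e1 : u.1 ⟨0, by omega⟩ = v.1 ⟨m'-1, by omega⟩ :=
          hrev' ⟨0, by omega⟩ (show (0:ℕ) < m' by omega)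
        have e2 : u.1 ⟨k*2-1, by omega⟩ = v.1 lst :=
          hfix' ⟨k*2-1, by omega⟩ (show m' ≤ k*2-1 by omega)
        have hved : v.1 ⟨m'-1, by omega⟩ = v.1 lst := by
          calc v.1 ⟨m'-1, by omega⟩ = u.1 ⟨0, by omega⟩ := e1.symm
            _ = u.1 ⟨k*2-1, by omega⟩ := husig
            _ = v.1 lst := e2
        have hqlst : (⟨m'-1, by omega⟩ : Fin (k*2)) ≠ lst := by
          intro h
          have := congrArg Fin.val h
          simp only [hlstdef, Fin.val_mk] at this
          omega
        have hqp := huniq ⟨m'-1, by omega⟩ hved hqlst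
        have hm'val : m' - 1 = (p:ℕ) := congrArg Fin.val hqp
        have hm'eq : m' = (p:ℕ) + 1 := by omega
        apply Subtype.ext
        funext i
        by_cases hi : (i:ℕ) < m'
        · rw [hrev' i hi]
          show _ = v.1 (e i)
          rw [revE_lt hmle i (by omega)]
          exact congrArg v.1 (Fin.ext (show m'-1-(i:ℕ) = (p:ℕ)+1-1-(i:ℕ) by omega))
        · push_neg at hi
          rw [hfix' i hi]
          show _ = v.1 (e i)
          rw [revE_ge hmle i (by omega)]
      · rintro rfl
        refine ⟨?_, hwSig⟩
        simp only [PCGraph, SimpleGraph.fromRel_adj]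
        exact ⟨hvwne, Or.inl hadj_vw⟩
    rw [hset, Set.ncard_singleton]
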